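/- Let C₁ᵃ, C₂ᵃ, C₁ᵇ, C₂ᵇ be reals with 0 < C₁ᵃ ≤ C₂ᵃ and 0 < C₁ᵇ ≤ C₂ᵇ, let θ ∈ (0,1], and let μ̄, ῑ ≥ 0 satisfy μ̄² ≤ (C₁ᵃ/C₂ᵃ)(1−θ) and ῑ² ≤ (C₁ᵇ/C₂ᵇ)(1−θ). Let (α_t), (β_t) be sequences with C₁ᵃ ≤ α_t ≤ C₂ᵃ and C₁ᵇ ≤ β_t ≤ C₂ᵇ, let (ε_t) be a nonnegative, nonincreasing, summable sequence, let (a_t), (b_t) be nonnegative sequences with a₀ = b₀ = 0, let (F_t) be a real sequence bounded below by some F* ∈ ℝ, and let C̄ ≥ 0, (d_t) a nonnegative sequence. Suppose for all t ≥ 0: (i) F_{t+1} − F_t ≤ √(2 α_t ε_t)·a_{t+1} − (α_t/2)(a_{t+1}² − μ̄² a_t²) − (β_t/2)(b_{t+1}² − ῑ² b_t²) + ε_t, and (ii) d_{t+1} ≤ C̄(a_{t+1} + a_t + b_{t+1} + b_t) + √(2 α_t ε_t). Then there exists a finite constant C such that for all t ≥ 1, min_{0 ≤ t' ≤ t} d_{t'+1}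 ≤ C/√t. -/

import Mathlib

private lemma shift_sum16 (f : ℕ → ℝ) (h0 : f 0 = 0) (hnn : ∀ t, 0 ≤ f t) (n : ℕ) :
    ∑ t ∈ Finset.range n, f t ≤ ∑ t ∈ Finset.range n, f (t + 1) := by
  cases n with
  | zero => simp
  | succ m =>
    rw [Finset.sum_range_succ', h0, add_zero]
    exact Finset.sum_le_sum_of_subset_of_nonneg
      (Finset.range_subset_range.2 (Nat.le_succ m)) (fun i _ _ => hnn (i + 1))

private lemma sqrt_young16 (P Q A : ℝ) (hP : 0 ≤ P) (hQ : 0 ≤ Q) (hA : 0 ≤ A) :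
    Real.sqrt P * Real.sqrt Q * A ≤ P * A ^ 2 / 2 + Q / 2 := by
  have s1 : Real.sqrt P ^ 2 = P := Real.sq_sqrt hP
  have s2 : Real.sqrt Q ^ 2 = Q := Real.sq_sqrt hQ
  nlinarith [sq_nonneg (Real.sqrt P * A - Real.sqrt Q), Real.sqrt_nonneg P,
    Real.sqrt_nonneg Q]

private lemma foursq16 (p q r s : ℝ) :
    (p + q + r + s) ^ 2 ≤ 4 * (p ^ 2 + q ^ 2 + r ^ 2 + s ^ 2) := by
  nlinarith [sq_nonneg (p - q), sq_nonneg (p - r), sq_nonneg (p - s),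
    sq_nonneg (q - r), sq_nonneg (q - s), sq_nonneg (r - s)]

private lemma twosq16 (X Y : ℝ) : (X + Y) ^ 2 ≤ 2 * X ^ 2 + 2 * Y ^ 2 := by
  nlinarith [sq_nonneg (X - Y)]

set_option maxHeartbeats 1600000 in
/-- Abstract form of Theorem 1: the per-iteration descent bound (i) and the
approximate-stationarity bound (ii) imply an O(1/√t) convergence rate of the best
iterate's stationarity measure. -/
theorem stmt16 (C1a C2a C1b C2b : ℝ)
    (h1a : 0 < C1a) (h12a : C1a ≤ C2a) (h1b : 0 < C1b) (h12b : C1b ≤ C2b)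
    (θ : ℝ) (hθ : 0 < θ) (hθ1 : θ ≤ 1)
    (μ ι : ℝ) (hμ0 : 0 ≤ μ) (hι0 : 0 ≤ ι)
    (hμ : μ ^ 2 ≤ C1a / C2a * (1 - θ)) (hι : ι ^ 2 ≤ C1b / C2b * (1 - θ))
    (α β ε a b F d : ℕ → ℝ)
    (hα : ∀ t, C1a ≤ α t ∧ α t ≤ C2a) (hβ : ∀ t, C1b ≤ β t ∧ β t ≤ C2b)
    (hεnn : ∀ t, 0 ≤ ε t) (hεmono : ∀ t, ε (t + 1) ≤ ε t) (hεsum : Summable ε)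
    (ha : ∀ t, 0 ≤ a t) (hb : ∀ t, 0 ≤ b t) (ha0 : a 0 = 0) (hb0 : b 0 = 0)
    (Fstar : ℝ) (hF : ∀ t, Fstar ≤ F t)
    (Cbar : ℝ) (hCbar : 0 ≤ Cbar) (hd : ∀ t, 0 ≤ d t)
    (hi : ∀ t, F (t + 1) - F t ≤
      Real.sqrt (2 * α t * ε t) * a (t + 1)
        - α t / 2 * ((a (t + 1)) ^ 2 - μ ^ 2 * (a t) ^ 2)
        - β t / 2 * ((b (t + 1)) ^ 2 - ι ^ 2 * (b t) ^ 2) + ε t)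
    (hii : ∀ t, d (t + 1) ≤
      Cbar * (a (t + 1) + a t + b (t + 1) + b t) + Real.sqrt (2 * α t * ε t)) :
    ∃ C : ℝ, ∀ t : ℕ, 1 ≤ t → ∃ t' : ℕ, t' ≤ t ∧ d (t' + 1) ≤ C / Real.sqrt t := by
  have h2a : 0 < C2a := lt_of_lt_of_le h1a h12a
  have h2b : 0 < C2b := lt_of_lt_of_le h1b h12b
  have hθ' : (0:ℝ) ≤ 1 - θ := by linarith
  set E := ∑' t, ε t with hEdef
  have hE := hεsum.hasSum
  have hεle : ∀ n, ∑ t ∈ Finset.range n, ε t ≤ E :=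
    fun n => sum_le_hasSum (Finset.range n) (fun i _ => hεnn i) hE
  set M := F 0 - Fstar + (2/θ + 1) * E with hMdef
  -- step 1: per-step descent inequality after Young's inequality
  have hkey : ∀ t, C1a*(2-θ)/4 * a (t+1)^2 - C1a*(1-θ)/2 * (a t)^2
      + C1b/2 * b (t+1)^2 - C1b*(1-θ)/2 * (b t)^2
      ≤ F t - F (t+1) + (2/θ + 1) * ε t := by
    intro t
    obtain ⟨hα1, hα2⟩ := hα t
    obtain ⟨hβ1, hβ2⟩ := hβ t
    have hα0 : 0 < α t := lt_of_lt_of_le h1a hα1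
    have hβ0 : 0 < β t := lt_of_lt_of_le h1b hβ1
    have hεt := hεnn t
    -- Young's inequality
    have hy : Real.sqrt (2 * α t * ε t) * a (t+1)
        ≤ α t * θ / 4 * a (t+1)^2 + 2/θ * ε t := by
      have h1 : Real.sqrt (2 * α t * ε t)
          = Real.sqrt (α t * θ / 2) * Real.sqrt (4 * ε t / θ) := by
        rw [← Real.sqrt_mul (by positivity)]
        congr 1
        field_simp
        ring
      rw [h1]
      refine le_trans (sqrt_young16 (α t * θ / 2) (4 * ε t / θ) (a (t+1))
        (by positivity) (by positivity) (ha _)) (le_of_eq ?_)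
      field_simp
      ring
    have hμα : μ^2 * α t ≤ C1a * (1-θ) := by
      have h1 : μ^2 * α t ≤ μ^2 * C2a := mul_le_mul_of_nonneg_left hα2 (sq_nonneg μ)
      have h2 : μ^2 * C2a ≤ C1a / C2a * (1-θ) * C2a :=
        mul_le_mul_of_nonneg_right hμ h2a.le
      have h3 : C1a / C2a * (1-θ) * C2a = C1a * (1-θ) := by field_simp
      linarith
    have hιβ : ι^2 * β t ≤ C1b * (1-θ) := by
      have h1 : ι^2 * β t ≤ ι^2 * C2b := mul_le_mul_of_nonneg_left hβ2 (sq_nonneg ι)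
      have h2 : ι^2 * C2b ≤ C1b / C2b * (1-θ) * C2b :=
        mul_le_mul_of_nonneg_right hι h2b.le
      have h3 : C1b / C2b * (1-θ) * C2b = C1b * (1-θ) := by field_simp
      linarith
    have f1 : 0 ≤ (α t - C1a) * ((2-θ) * a (t+1)^2) := by
      apply mul_nonneg (by linarith)
      exact mul_nonneg (by linarith) (sq_nonneg _)
    have f2 : 0 ≤ (C1a*(1-θ) - μ^2 * α t) * (a t)^2 :=
      mul_nonneg (by linarith) (sq_nonneg _)
    have f3 : 0 ≤ (β t - C1b) * b (t+1)^2 :=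
      mul_nonneg (by linarith) (sq_nonneg _)
    have f4 : 0 ≤ (C1b*(1-θ) - ι^2 * β t) * (b t)^2 :=
      mul_nonneg (by linarith) (sq_nonneg _)
    have hit := hi t
    linarith only [hit, hy, f1, f2, f3, f4]
  -- step 2: summed bound
  have hsum : ∀ n, C1a*θ/4 * (∑ t ∈ Finset.range n, a (t+1)^2)
      + C1b*θ/2 * (∑ t ∈ Finset.range n, b (t+1)^2) ≤ M := by
    intro n
    have h1 : ∑ t ∈ Finset.range n,
        (C1a*(2-θ)/4 * a (t+1)^2 - C1a*(1-θ)/2 * (a t)^2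
          + C1b/2 * b (t+1)^2 - C1b*(1-θ)/2 * (b t)^2)
        ≤ ∑ t ∈ Finset.range n, (F t - F (t+1) + (2/θ + 1) * ε t) :=
      Finset.sum_le_sum (fun t _ => hkey t)
    have hrhs : ∑ t ∈ Finset.range n, (F t - F (t+1) + (2/θ + 1) * ε t)
        = (F 0 - F n) + (2/θ + 1) * ∑ t ∈ Finset.range n, ε t := by
      rw [Finset.sum_add_distrib, Finset.sum_range_sub' F n, Finset.mul_sum]
    have hlhs : ∑ t ∈ Finset.range n,
        (C1a*(2-θ)/4 * a (t+1)^2 - C1a*(1-θ)/2 * (a t)^2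
          + C1b/2 * b (t+1)^2 - C1b*(1-θ)/2 * (b t)^2)
        = C1a*(2-θ)/4 * (∑ t ∈ Finset.range n, a (t+1)^2)
          - C1a*(1-θ)/2 * (∑ t ∈ Finset.range n, (a t)^2)
          + C1b/2 * (∑ t ∈ Finset.range n, b (t+1)^2)
          - C1b*(1-θ)/2 * (∑ t ∈ Finset.range n, (b t)^2) := by
      simp only [Finset.sum_add_distrib, Finset.sum_sub_distrib, Finset.mul_sum]
    rw [hlhs, hrhs] at h1
    have hsa := shift_sum16 (fun t => (a t)^2) (by simp [ha0]) (fun t => sq_nonneg _) n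
    have hsb := shift_sum16 (fun t => (b t)^2) (by simp [hb0]) (fun t => sq_nonneg _) n
    have ga : C1a*(1-θ)/2 * (∑ t ∈ Finset.range n, (a t)^2)
        ≤ C1a*(1-θ)/2 * (∑ t ∈ Finset.range n, a (t+1)^2) :=
      mul_le_mul_of_nonneg_left hsa (by positivity)
    have gb : C1b*(1-θ)/2 * (∑ t ∈ Finset.range n, (b t)^2)
        ≤ C1b*(1-θ)/2 * (∑ t ∈ Finset.range n, b (t+1)^2) :=
      mul_le_mul_of_nonneg_left hsb (by positivity)
    have gε : (2/θ + 1) * (∑ t ∈ Finset.range n, ε t) ≤ (2/θ + 1) * E :=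
      mul_le_mul_of_nonneg_left (hεle n) (by positivity)
    have hFn := hF n
    have expand1 : C1a*θ/4 * (∑ t ∈ Finset.range n, a (t+1)^2)
        = C1a*(2-θ)/4 * (∑ t ∈ Finset.range n, a (t+1)^2)
          - C1a*(1-θ)/2 * (∑ t ∈ Finset.range n, a (t+1)^2) := by ring
    have expand2 : C1b*θ/2 * (∑ t ∈ Finset.range n, b (t+1)^2)
        = C1b/2 * (∑ t ∈ Finset.range n, b (t+1)^2)
          - C1b*(1-θ)/2 * (∑ t ∈ Finset.range n, b (t+1)^2) := by ring
    rw [hMdef, expand1, expand2]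
    linarith only [h1, ga, gb, gε, hFn]
  have hM0 : 0 ≤ M := by simpa using hsum 0
  set Sa := M / (C1a*θ/4) with hSadef
  set Sb := M / (C1b*θ/2) with hSbdef
  have hca : 0 < C1a*θ/4 := by positivity
  have hcb : 0 < C1b*θ/2 := by positivity
  have hSa : ∀ n, ∑ t ∈ Finset.range n, a (t+1)^2 ≤ Sa := by
    intro n
    rw [hSadef, le_div_iff₀ hca]
    have hb2 : 0 ≤ C1b*θ/2 * (∑ t ∈ Finset.range n, b (t+1)^2) := by positivity
    have h := hsum n
    linarith only [h, hb2]
  have hSb : ∀ n, ∑ t ∈ Finset.range n, b (t+1)^2 ≤ Sb := by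
    intro n
    rw [hSbdef, le_div_iff₀ hcb]
    have ha2 : 0 ≤ C1a*θ/4 * (∑ t ∈ Finset.range n, a (t+1)^2) := by positivity
    have h := hsum n
    linarith only [h, ha2]
  have hSa' : ∀ n, ∑ t ∈ Finset.range n, (a t)^2 ≤ Sa := fun n =>
    le_trans (shift_sum16 (fun t => (a t)^2) (by simp [ha0]) (fun t => sq_nonneg _) n) (hSa n)
  have hSb' : ∀ n, ∑ t ∈ Finset.range n, (b t)^2 ≤ Sb := fun n =>
    le_trans (shift_sum16 (fun t => (b t)^2) (by simp [hb0]) (fun t => sq_nonneg _) n) (hSb n)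
  -- step 3: pointwise bound on d²
  have hd2 : ∀ t, d (t+1)^2 ≤ 8 * Cbar^2 * (a (t+1)^2 + (a t)^2 + b (t+1)^2 + (b t)^2)
      + 4 * C2a * ε t := by
    intro t
    obtain ⟨hα1, hα2⟩ := hα t
    have hα0 : 0 < α t := lt_of_lt_of_le h1a hα1
    have hεt := hεnn t
    set X := Cbar * (a (t+1) + a t + b (t+1) + b t) with hXdef
    set Y := Real.sqrt (2 * α t * ε t) with hYdef
    have hdle : d (t+1) ≤ X + Y := hii t
    have hdsq : d (t+1)^2 ≤ (X + Y)^2 := pow_le_pow_left₀ (hd (t+1)) hdle 2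
    have h2sq : (X + Y)^2 ≤ 2 * X^2 + 2 * Y^2 := twosq16 X Y
    have hY2 : Y^2 = 2 * α t * ε t := Real.sq_sqrt (by positivity)
    have hY2' : Y^2 ≤ 2 * C2a * ε t := by
      rw [hY2]
      exact mul_le_mul_of_nonneg_right (by linarith) hεt
    have hX2 : X^2 ≤ Cbar^2 * (4 * (a (t+1)^2 + (a t)^2 + b (t+1)^2 + (b t)^2)) := by
      rw [hXdef, mul_pow]
      exact mul_le_mul_of_nonneg_left (foursq16 _ _ _ _) (sq_nonneg _)
    have hX2' : 2 * X^2 ≤ 8 * Cbar^2 * (a (t+1)^2 + (a t)^2 + b (t+1)^2 + (b t)^2) := by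
      linarith only [hX2]
    linarith only [hdsq, h2sq, hX2', hY2']
  -- step 4: bounded partial sums of d²
  set S := 8 * Cbar^2 * (2*Sa + 2*Sb) + 4 * C2a * E with hSdef
  have hdsum : ∀ n, ∑ t ∈ Finset.range n, d (t+1)^2 ≤ S := by
    intro n
    have h1 : ∑ t ∈ Finset.range n, d (t+1)^2
        ≤ ∑ t ∈ Finset.range n,
          (8 * Cbar^2 * (a (t+1)^2 + (a t)^2 + b (t+1)^2 + (b t)^2) + 4 * C2a * ε t) :=
      Finset.sum_le_sum (fun t _ => hd2 t)
    have h2 : ∑ t ∈ Finset.range n,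
          (8 * Cbar^2 * (a (t+1)^2 + (a t)^2 + b (t+1)^2 + (b t)^2) + 4 * C2a * ε t)
        = 8 * Cbar^2 * ((∑ t ∈ Finset.range n, a (t+1)^2)
            + (∑ t ∈ Finset.range n, (a t)^2)
            + (∑ t ∈ Finset.range n, b (t+1)^2)
            + (∑ t ∈ Finset.range n, (b t)^2))
          + 4 * C2a * (∑ t ∈ Finset.range n, ε t) := by
      rw [Finset.sum_add_distrib, ← Finset.mul_sum, ← Finset.mul_sum]
      congr 2
      rw [Finset.sum_add_distrib, Finset.sum_add_distrib, Finset.sum_add_distrib]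
    rw [h2] at h1
    have g1 : 8 * Cbar^2 * ((∑ t ∈ Finset.range n, a (t+1)^2)
            + (∑ t ∈ Finset.range n, (a t)^2)
            + (∑ t ∈ Finset.range n, b (t+1)^2)
            + (∑ t ∈ Finset.range n, (b t)^2))
        ≤ 8 * Cbar^2 * (2*Sa + 2*Sb) := by
      apply mul_le_mul_of_nonneg_left _ (by positivity)
      linarith only [hSa n, hSa' n, hSb n, hSb' n]
    have g2 : 4 * C2a * (∑ t ∈ Finset.range n, ε t) ≤ 4 * C2a * E :=
      mul_le_mul_of_nonneg_left (hεle n) (by positivity)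
    rw [hSdef]
    linarith only [h1, g1, g2]
  have hS0 : 0 ≤ S := by simpa using hdsum 0
  -- step 5: conclusion
  refine ⟨Real.sqrt S, fun t ht => ?_⟩
  have htpos : (0:ℝ) < t := by exact_mod_cast ht
  have hcard : ∑ _x ∈ Finset.range (t+1), S / ((t:ℝ)+1) = S := by
    rw [Finset.sum_const, Finset.card_range, nsmul_eq_mul]
    push_cast
    field_simp
  have hsum' : ∑ t' ∈ Finset.range (t+1), d (t'+1)^2
      ≤ ∑ _t' ∈ Finset.range (t+1), S / ((t:ℝ)+1) := by
    rw [hcard]; exact hdsum (t+1)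
  obtain ⟨t', ht', hle⟩ := Finset.exists_le_of_sum_le
    (⟨0, Finset.mem_range.2 (Nat.succ_pos t)⟩ : (Finset.range (t+1)).Nonempty) hsum'
  refine ⟨t', Nat.lt_succ_iff.mp (Finset.mem_range.1 ht'), ?_⟩
  have hdiv : S / ((t:ℝ)+1) ≤ S / t :=
    div_le_div_of_nonneg_left hS0 htpos (by linarith)
  have h1 : d (t'+1) = Real.sqrt (d (t'+1)^2) := (Real.sqrt_sq (hd _)).symm
  rw [h1, ← Real.sqrt_div hS0]
  exact Real.sqrt_le_sqrt (le_trans hle hdiv)
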